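/- arXiv:2111.10107 — 3 statements merged into one kernel-verified Lean document; each statement's English description precedes it below -/
import Mathlib

section
/- Let Ω ⊂ ℝⁿ be a bounded open set with Lipschitz boundary and β > 0. Define Λ∞(Ω) = 1/(1/β + R_Ω). If Ω^♯ is the ball with the same Lebesgue measure as Ω, then Λ∞(Ω) ≥ Λ∞(Ω^♯). -/
open MeasureTheory Metric

lemma ball_infDist_frontier_subset {E : Type*} [NormedAddCommGroup E] [NormedSpace ℝ E]
    {Ω : Set E} {x : E} (hx : x ∈ Ω) : ball x (infDist x (frontier Ω)) ⊆ Ω := by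
  intro y hy
  by_contra hyΩ
  rw [mem_ball, dist_comm] at hy
  have hseg : IsPreconnected (segment ℝ x y) := (convex_segment x y).isPreconnected
  -- the segment meets the frontier
  have : (segment ℝ x y ∩ frontier Ω).Nonempty := by
    by_contra h
    rw [Set.not_nonempty_iff_eq_empty] at h
    have hsub : segment ℝ x y ⊆ interior Ω ∪ (closure Ω)ᶜ := by
      intro z hz
      by_cases h1 : z ∈ interior Ω
      · exact Or.inl h1
      · refine Or.inr fun h2 => ?_
        have : z ∈ segment ℝ x y ∩ frontier Ω := ⟨hz, h2, h1⟩
        simp [h] at this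
    have hdisj : Disjoint (interior Ω) (closure Ω)ᶜ :=
      disjoint_compl_right.mono_left (interior_subset.trans subset_closure)
    rcases hseg.subset_or_subset isOpen_interior (isClosed_closure.isOpen_compl) hdisj hsub with
      hc | hc
    · exact hyΩ (interior_subset (hc (right_mem_segment ℝ x y)))
    · exact (hc (left_mem_segment ℝ x y)) (subset_closure hx)
  obtain ⟨z, hzs, hzf⟩ := this
  have h1 : infDist x (frontier Ω) ≤ dist x z := infDist_le_dist_of_mem hzf
  have h2 : dist x z ≤ dist x y := by
    have := (convex_closedBall x (dist x y)).segment_subset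
      (mem_closedBall_self dist_nonneg) (by simp [dist_comm, mem_closedBall]) hzs
    simpa [mem_closedBall, dist_comm] using this
  linarith


/-- Faber–Krahn type inequality for `Λ∞(Ω) = 1/(1/β + R_Ω)`: if `Ω^♯`
is the ball with the same Lebesgue measure as `Ω`, then `Λ∞(Ω) ≥ Λ∞(Ω^♯)`. -/
theorem stmt_6 {n : ℕ} (Ω : Set (EuclideanSpace ℝ (Fin n)))
    (hΩo : IsOpen Ω) (hΩb : Bornology.IsBounded Ω) (hΩne : Ω.Nonempty)
    (β : ℝ) (hβ : 0 < β)
    (r : ℝ) (hr : 0 < r)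
    (hvol : volume Ω = volume (ball (0 : EuclideanSpace ℝ (Fin n)) r)) :
    1 / (1 / β + sSup ((fun x => infDist x (frontier Ω)) '' Ω)) ≥
      1 / (1 / β +
        sSup ((fun x => infDist x (frontier (ball (0 : EuclideanSpace ℝ (Fin n)) r))) ''
          (ball (0 : EuclideanSpace ℝ (Fin n)) r))) := by
  rcases Nat.eq_zero_or_pos n with hn | hn
  · -- trivial case: the space is a single point
    subst hn
    have hsub : Subsingleton (EuclideanSpace ℝ (Fin 0)) := by
      refine ⟨fun a b => ?_⟩
      ext i
      exact absurd i.2 (by simp)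
    have hΩu : Ω = Set.univ := hΩne.eq_univ
    have hBu : ball (0 : EuclideanSpace ℝ (Fin 0)) r = Set.univ := (Set.nonempty_of_mem (mem_ball_self hr)).eq_univ
    rw [hΩu, hBu]
  · haveI : Nontrivial (EuclideanSpace ℝ (Fin n)) := by
      refine nontrivial_of_ne (EuclideanSpace.single (⟨0, hn⟩ : Fin n) (1:ℝ)) 0 ?_
      intro h
      simpa [EuclideanSpace.single_apply] using congrArg (fun v : EuclideanSpace ℝ (Fin n) => v (⟨0, hn⟩ : Fin n)) h
    have hfr : Module.finrank ℝ (EuclideanSpace ℝ (Fin n)) = n := by simp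
    -- inradius bound for Ω
    have hAle : ∀ x ∈ Ω, infDist x (frontier Ω) ≤ r := by
      intro x hx
      set d := infDist x (frontier Ω) with hd
      have hd0 : 0 ≤ d := infDist_nonneg
      have hvle : volume (ball x d) ≤ volume (ball (0 : EuclideanSpace ℝ (Fin n)) r) := by
        rw [← hvol]
        exact measure_mono (ball_infDist_frontier_subset hx)
      rw [Measure.addHaar_ball volume x hd0, Measure.addHaar_ball volume (0 : EuclideanSpace ℝ (Fin n)) hr.le, hfr] at hvle
      have hc0 : volume (ball (0 : EuclideanSpace ℝ (Fin n)) 1) ≠ 0 := (measure_ball_pos volume (0 : EuclideanSpace ℝ (Fin n)) one_pos).ne'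
      have hct : volume (ball (0 : EuclideanSpace ℝ (Fin n)) 1) ≠ ⊤ := measure_ball_lt_top.ne
      have hpow : d ^ n ≤ r ^ n := by
        have := (ENNReal.mul_le_mul_iff_left hc0 hct).1 hvle
        exact (ENNReal.ofReal_le_ofReal_iff (by positivity)).1 this
      exact le_of_pow_le_pow_left₀ hn.ne' hr.le hpow
    -- the frontier of the ball is the sphere
    have hfb : frontier (ball (0 : EuclideanSpace ℝ (Fin n)) r) = sphere 0 r := frontier_ball 0 hr.ne'
    -- each value over the ball is ≤ r
    have hBle : ∀ x ∈ ball (0 : EuclideanSpace ℝ (Fin n)) r, infDist x (frontier (ball (0 : EuclideanSpace ℝ (Fin n)) r)) ≤ r := by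
      intro x hx
      rw [hfb]
      rcases eq_or_ne x 0 with rfl | hx0
      · obtain ⟨y, hy⟩ := (NormedSpace.sphere_nonempty (x := (0 : EuclideanSpace ℝ (Fin n)))).2 hr.le
        calc infDist 0 (sphere (0:EuclideanSpace ℝ (Fin n)) r) ≤ dist 0 y := infDist_le_dist_of_mem hy
          _ = r := by rw [dist_comm]; exact mem_sphere.1 hy
      · have hxn : 0 < ‖x‖ := norm_pos_iff.2 hx0
        have hxr : ‖x‖ < r := by simpa [mem_ball, dist_eq_norm] using hx
        have hmem : ((r / ‖x‖) • x) ∈ sphere (0 : EuclideanSpace ℝ (Fin n)) r := by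
          simp only [mem_sphere, dist_eq_norm, sub_zero, norm_smul, Real.norm_eq_abs,
            abs_of_pos (div_pos hr hxn)]
          field_simp
        calc infDist x (sphere (0:EuclideanSpace ℝ (Fin n)) r) ≤ dist x ((r / ‖x‖) • x) :=
              infDist_le_dist_of_mem hmem
          _ = r - ‖x‖ := by
              rw [dist_eq_norm]
              have h1 : x - (r / ‖x‖) • x = (1 - r / ‖x‖) • x := by
                rw [sub_smul, one_smul]
              rw [h1, norm_smul, Real.norm_eq_abs,
                abs_of_nonpos (by rw [sub_nonpos]; exact (le_div_iff₀ hxn).2 (by linarith))]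
              field_simp
              ring
          _ ≤ r := by linarith
    -- sSup for the ball equals r
    have hBsup : sSup ((fun x => infDist x (frontier (ball (0 : EuclideanSpace ℝ (Fin n)) r))) '' ball (0 : EuclideanSpace ℝ (Fin n)) r)
        = r := by
      refine le_antisymm (Real.sSup_le ?_ hr.le) ?_
      · rintro a ⟨x, hx, rfl⟩
        exact hBle x hx
      · refine le_csSup ⟨r, ?_⟩ ⟨0, mem_ball_self hr, ?_⟩
        · rintro a ⟨x, hx, rfl⟩
          exact hBle x hx
        · rw [hfb]
          refine le_antisymm ?_ ?_
          · obtain ⟨y, hy⟩ := (NormedSpace.sphere_nonempty (x := (0 : EuclideanSpace ℝ (Fin n)))).2 hr.le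
            calc infDist 0 (sphere (0:EuclideanSpace ℝ (Fin n)) r) ≤ dist 0 y := infDist_le_dist_of_mem hy
              _ = r := by rw [dist_comm]; exact mem_sphere.1 hy
          · by_contra hlt
            push_neg at hlt
            obtain ⟨y, hy, hylt⟩ := (infDist_lt_iff
              ((NormedSpace.sphere_nonempty (x := (0 : EuclideanSpace ℝ (Fin n)))).2 hr.le)).1 hlt
            rw [dist_comm] at hylt
            have := mem_sphere.1 hy
            linarith
    -- sSup for Ω is between 0 and r
    obtain ⟨x₀, hx₀⟩ := hΩne
    have hAbdd : BddAbove ((fun x => infDist x (frontier Ω)) '' Ω) := by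
      refine ⟨r, ?_⟩
      rintro a ⟨x, hx, rfl⟩
      exact hAle x hx
    have hA0 : 0 ≤ sSup ((fun x => infDist x (frontier Ω)) '' Ω) :=
      le_trans infDist_nonneg (le_csSup hAbdd ⟨x₀, hx₀, rfl⟩)
    have hAr : sSup ((fun x => infDist x (frontier Ω)) '' Ω) ≤ r := by
      refine Real.sSup_le ?_ hr.le
      rintro a ⟨x, hx, rfl⟩
      exact hAle x hx
    rw [hBsup]
    have h1 : 0 < 1 / β + sSup ((fun x => infDist x (frontier Ω)) '' Ω) := by positivity
    exact one_div_le_one_div_of_le h1 (by linarith)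
end

section
/- Fix 0 < ε < 1, n ≥ 2, β > 0, and for p > n set α = 1/(p−1). Define v_p on B₁(0) ⊂ ℝⁿ piecewise by v_p(x) = ((p−1)/(n^α p))(ε^{p/(p−1)} − |x|^{p/(p−1)}) + (ε^{nα}(p−1)/(n^α (p−n)))(1 − ε^{(p−n)/(p−1)}) + ε^{nα}/(nβ^p)^α for |x| ≤ ε, and v_p(x) = (ε^{nα}(p−1)/(n^α(p−n)))(1 − |x|^{(p−n)/(p−1)}) + ε^{nα}/(nβ^p)^α for ε ≤ |x| ≤ 1. Then v_p converges uniformly on B₁(0), as p → ∞, to v_∞(x) = 1/β + 1 − |x| = 1/β + d(x, ∂B₁(0)). -/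
open Metric Filter

lemma aux_log {s : ℝ} (h0 : 0 < s) : s * (-Real.log s) ≤ 1 - s := by
  have h1 : Real.log s⁻¹ ≤ s⁻¹ - 1 := Real.log_le_sub_one_of_pos (by positivity)
  rw [Real.log_inv] at h1
  have h2 : s * (-Real.log s) ≤ s * (s⁻¹ - 1) :=
    mul_le_mul_of_nonneg_left h1 h0.le
  calc s * (-Real.log s) ≤ s * (s⁻¹ - 1) := h2
    _ = 1 - s := by field_simp

lemma one_sub_rpow_le {t r : ℝ} (ht : 0 < t) : 1 - t ^ r ≤ r * (-Real.log t) := by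
  have h : Real.log t * r + 1 ≤ Real.exp (Real.log t * r) := Real.add_one_le_exp _
  rw [Real.rpow_def_of_pos ht]
  nlinarith

lemma pow_aux {t q : ℝ} (ht0 : 0 ≤ t) (ht1 : t ≤ 1) (hqa : 1/2 ≤ q) (hqb : q ≤ 2) :
    |t ^ q - t| ≤ 2 * |q - 1| := by
  rcases eq_or_lt_of_le ht0 with h | h
  · rw [← h, Real.zero_rpow (by linarith), sub_zero, abs_zero]
    positivity
  have hlog : Real.log t ≤ 0 := Real.log_nonpos ht0 ht1
  rcases le_total q 1 with hq | hq
  · -- q ≤ 1 : t ≤ t^q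
    have hts : t ≤ t ^ q := by
      calc t = t ^ (1:ℝ) := (Real.rpow_one t).symm
        _ ≤ t ^ q := Real.rpow_le_rpow_of_exponent_ge h ht1 hq
    have hsplit : t ^ q * t ^ (1 - q) = t := by
      rw [← Real.rpow_add h]; norm_num
    have h1 : 1 - t ^ (1 - q) ≤ (1 - q) * (-Real.log t) := one_sub_rpow_le h
    have htq : t ^ q ≤ t ^ (1/2 : ℝ) := Real.rpow_le_rpow_of_exponent_ge h ht1 hqa
    have hs : (0:ℝ) < t ^ (1/2 : ℝ) := Real.rpow_pos_of_pos h _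
    have hlogs : Real.log (t ^ (1/2 : ℝ)) = (1/2) * Real.log t := Real.log_rpow h _
    have haux : t ^ (1/2:ℝ) * (-Real.log (t ^ (1/2:ℝ))) ≤ 1 - t ^ (1/2:ℝ) := aux_log hs
    have hkey : t ^ (1/2:ℝ) * (-Real.log t) ≤ 2 := by
      rw [hlogs] at haux; nlinarith
    have htqpos : (0:ℝ) < t ^ q := Real.rpow_pos_of_pos h _
    have hdiff : t ^ q - t = t ^ q * (1 - t ^ (1 - q)) := by linear_combination hsplit
    rw [abs_of_nonneg (by linarith : (0:ℝ) ≤ t ^ q - t), abs_of_nonpos (by linarith : q - 1 ≤ 0)]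
    have hb1 : t ^ q * (1 - t ^ (1-q)) ≤ t ^ q * ((1 - q) * (-Real.log t)) :=
      mul_le_mul_of_nonneg_left h1 htqpos.le
    have hb2 : t ^ q * ((1 - q) * (-Real.log t)) ≤ t ^ (1/2:ℝ) * ((1 - q) * (-Real.log t)) := by
      exact mul_le_mul_of_nonneg_right htq (mul_nonneg (by linarith) (by linarith))
    nlinarith [hkey, hdiff]
  · -- 1 ≤ q : t^q ≤ t
    have hts : t ^ q ≤ t := by
      calc t ^ q ≤ t ^ (1:ℝ) := Real.rpow_le_rpow_of_exponent_ge h ht1 hq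
        _ = t := Real.rpow_one t
    have hsplit : t * t ^ (q - 1) = t ^ q := by
      nth_rewrite 1 [← Real.rpow_one t]
      rw [← Real.rpow_add h]; norm_num
    have h1 : 1 - t ^ (q - 1) ≤ (q - 1) * (-Real.log t) := one_sub_rpow_le h
    have haux : t * (-Real.log t) ≤ 1 - t := aux_log h
    rw [abs_of_nonpos (by linarith : t ^ q - t ≤ 0), abs_of_nonneg (by linarith : (0:ℝ) ≤ q - 1)]
    have hdiff : t - t ^ q = t * (1 - t ^ (q - 1)) := by linear_combination hsplit
    have hb1 : t * (1 - t ^ (q-1)) ≤ t * ((q - 1) * (-Real.log t)) :=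
      mul_le_mul_of_nonneg_left h1 h.le
    nlinarith [haux, hdiff]

lemma tendsto_sub_div_sub (a b : ℝ) :
    Tendsto (fun p : ℝ => (p - a) / (p - b)) atTop (nhds 1) := by
  have h0 : Tendsto (fun p : ℝ => 1 + (b - a) / (p - b)) atTop (nhds 1) := by
    have : Tendsto (fun p : ℝ => (b - a) / (p - b)) atTop (nhds 0) :=
      Tendsto.div_atTop tendsto_const_nhds (tendsto_atTop_add_const_right _ _ tendsto_id)
    simpa using tendsto_const_nhds.add this
  apply h0.congr'
  filter_upwards [eventually_gt_atTop b] with p hp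
  have : p - b ≠ 0 := by linarith
  field_simp
  ring

lemma div_mul_helper (a b c : ℝ) : a / c * b⁻¹ = a / (b * c) := by
  rw [div_eq_mul_inv, div_eq_mul_inv, mul_inv]; ring

lemma div_mul_helper2 (a b c d : ℝ) : a * (b / c) * d⁻¹ = a * b / (d * c) := by
  rw [div_eq_mul_inv, div_eq_mul_inv, mul_inv]; ring

/-- The explicit radial solutions for `f = 1_{B_ε(0)}` on the unit
ball,
`v_p(x) = ((p−1)/(n^α p))(ε^{p/(p−1)} − |x|^{p/(p−1)}) +
          (ε^{nα}(p−1)/(n^α(p−n)))(1 − ε^{(p−n)/(p−1)}) + ε^{nα}/(nβ^p)^α`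
for `|x| ≤ ε` and
`v_p(x) = (ε^{nα}(p−1)/(n^α(p−n)))(1 − |x|^{(p−n)/(p−1)}) + ε^{nα}/(nβ^p)^α`
for `ε ≤ |x| ≤ 1` (with `α = 1/(p−1)`), converge uniformly on the unit ball, as
`p → ∞`, to `v_∞(x) = 1/β + 1 − |x| = 1/β + d(x, ∂B₁(0))`. -/
theorem stmt_16 {n : ℕ} (hn : 2 ≤ n) (β : ℝ) (hβ : 0 < β)
    (ε : ℝ) (hε0 : 0 < ε) (hε1 : ε < 1) :
    TendstoUniformlyOn
      (fun (p : ℝ) (x : EuclideanSpace ℝ (Fin n)) =>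
        if ‖x‖ ≤ ε then
          ((p - 1) / ((n : ℝ) ^ (1 / (p - 1)) * p)) *
              (ε ^ (p / (p - 1)) - ‖x‖ ^ (p / (p - 1))) +
            (ε ^ ((n : ℝ) * (1 / (p - 1))) * (p - 1) /
                ((n : ℝ) ^ (1 / (p - 1)) * (p - (n : ℝ)))) *
              (1 - ε ^ ((p - (n : ℝ)) / (p - 1))) +
            ε ^ ((n : ℝ) * (1 / (p - 1))) / ((n : ℝ) * β ^ p) ^ (1 / (p - 1))
        else
          (ε ^ ((n : ℝ) * (1 / (p - 1))) * (p - 1) /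
              ((n : ℝ) ^ (1 / (p - 1)) * (p - (n : ℝ)))) *
            (1 - ‖x‖ ^ ((p - (n : ℝ)) / (p - 1))) +
            ε ^ ((n : ℝ) * (1 / (p - 1))) / ((n : ℝ) * β ^ p) ^ (1 / (p - 1)))
      (fun x => 1 / β + 1 - ‖x‖)
      atTop (closedBall (0 : EuclideanSpace ℝ (Fin n)) 1) := by
  have hn2 : (2:ℝ) ≤ (n:ℝ) := by exact_mod_cast hn
  have hnpos : (0:ℝ) < (n:ℝ) := by linarith
  -- basic tendsto facts
  have hα : Tendsto (fun p : ℝ => 1 / (p - 1)) atTop (nhds 0) := by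
    simp only [one_div]
    exact tendsto_inv_atTop_zero.comp (tendsto_atTop_add_const_right _ (-1) tendsto_id)
  have hnα : Tendsto (fun p : ℝ => (n:ℝ) ^ (1 / (p - 1))) atTop (nhds 1) := by
    have hc : ContinuousAt (fun s : ℝ => (n:ℝ) ^ s) 0 :=
      Real.continuousAt_const_rpow (ne_of_gt hnpos)
    have := hc.tendsto.comp hα
    simpa [Real.rpow_zero, Function.comp_def] using this
  have hεnα : Tendsto (fun p : ℝ => ε ^ ((n:ℝ) * (1 / (p - 1)))) atTop (nhds 1) := by
    have hc : ContinuousAt (fun s : ℝ => ε ^ s) 0 :=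
      Real.continuousAt_const_rpow (ne_of_gt hε0)
    have hexp : Tendsto (fun p : ℝ => (n:ℝ) * (1 / (p - 1))) atTop (nhds 0) := by
      simpa using hα.const_mul (n:ℝ)
    have := hc.tendsto.comp hexp
    simpa [Real.rpow_zero, Function.comp_def] using this
  have hq1 : Tendsto (fun p : ℝ => p / (p - 1)) atTop (nhds 1) := by
    simpa using tendsto_sub_div_sub 0 1
  have hq2 : Tendsto (fun p : ℝ => (p - (n:ℝ)) / (p - 1)) atTop (nhds 1) :=
    tendsto_sub_div_sub (n:ℝ) 1
  have hA : Tendsto (fun p : ℝ => (p - 1) / ((n:ℝ) ^ (1 / (p - 1)) * p)) atTop (nhds 1) := by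
    have h1 : Tendsto (fun p : ℝ => (p - 1) / p) atTop (nhds 1) := by
      simpa using tendsto_sub_div_sub 1 0
    have h2 := h1.mul (hnα.inv₀ one_ne_zero)
    have h3 : Tendsto (fun p : ℝ => (p - 1) / p * ((n:ℝ) ^ (1 / (p - 1)))⁻¹)
        atTop (nhds 1) := by simpa using h2
    apply h3.congr
    intro p
    exact div_mul_helper _ _ _
  have hB : Tendsto (fun p : ℝ => ε ^ ((n:ℝ) * (1 / (p - 1))) * (p - 1) /
      ((n:ℝ) ^ (1 / (p - 1)) * (p - (n:ℝ)))) atTop (nhds 1) := by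
    have h1 : Tendsto (fun p : ℝ => (p - 1) / (p - (n:ℝ))) atTop (nhds 1) :=
      tendsto_sub_div_sub 1 (n:ℝ)
    have h2 := (hεnα.mul h1).mul (hnα.inv₀ one_ne_zero)
    have h3 : Tendsto (fun p : ℝ => ε ^ ((n:ℝ) * (1 / (p - 1))) * ((p - 1) / (p - (n:ℝ))) *
        ((n:ℝ) ^ (1 / (p - 1)))⁻¹) atTop (nhds 1) := by simpa using h2
    apply h3.congr
    intro p
    exact div_mul_helper2 _ _ _ _
  have hC : Tendsto (fun p : ℝ => ε ^ ((n:ℝ) * (1 / (p - 1))) /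
      ((n:ℝ) * β ^ p) ^ (1 / (p - 1))) atTop (nhds (1 / β)) := by
    have hden : Tendsto (fun p : ℝ => (n:ℝ) ^ (1 / (p - 1)) * β ^ (p / (p - 1)))
        atTop (nhds β) := by
      have hβc : ContinuousAt (fun s : ℝ => β ^ s) 1 :=
        Real.continuousAt_const_rpow (ne_of_gt hβ)
      have hb : Tendsto (fun p : ℝ => β ^ (p / (p - 1))) atTop (nhds β) := by
        have := hβc.tendsto.comp hq1
        simpa [Real.rpow_one, Function.comp_def] using this
      simpa using hnα.mul hb
    have h2 := hεnα.div hden (by positivity)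
    have h3 : Tendsto (fun p : ℝ => ε ^ ((n:ℝ) * (1 / (p - 1))) /
        ((n:ℝ) ^ (1 / (p - 1)) * β ^ (p / (p - 1)))) atTop (nhds (1 / β)) := by
      simpa [Pi.div_def] using h2
    apply h3.congr
    intro p
    congr 1
    rw [Real.mul_rpow hnpos.le (by positivity), ← Real.rpow_mul hβ.le, mul_one_div]
  rw [Metric.tendstoUniformlyOn_iff]
  intro η hη
  have hA' := Metric.tendsto_nhds.mp hA (η/8) (by positivity)
  have hB' := Metric.tendsto_nhds.mp hB (η/8) (by positivity)
  have hC' := Metric.tendsto_nhds.mp hC (η/8) (by positivity)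
  have hq1' := Metric.tendsto_nhds.mp hq1 (η/32) (by positivity)
  have hq2' := Metric.tendsto_nhds.mp hq2 (η/32) (by positivity)
  filter_upwards [hA', hB', hC', hq1', hq2', eventually_ge_atTop (2*(n:ℝ)+2)]
    with p hAp hBp hCp hq1p hq2p hpge x hx
  rw [Real.dist_eq] at hAp hBp hCp hq1p hq2p
  have hp1 : (0:ℝ) < p - 1 := by linarith
  have ht1 : ‖x‖ ≤ 1 := by
    rw [mem_closedBall, dist_zero_right] at hx; exact hx
  have ht0 : (0:ℝ) ≤ ‖x‖ := norm_nonneg x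
  -- exponent ranges
  have hq1a : (1:ℝ)/2 ≤ p / (p - 1) := by
    rw [le_div_iff₀ hp1]; linarith
  have hq1b : p / (p - 1) ≤ 2 := by
    rw [div_le_iff₀ hp1]; linarith
  have hq2a : (1:ℝ)/2 ≤ (p - (n:ℝ)) / (p - 1) := by
    rw [le_div_iff₀ hp1]; linarith
  have hq2b : (p - (n:ℝ)) / (p - 1) ≤ 2 := by
    rw [div_le_iff₀ hp1]; linarith
  have hq1pos : (0:ℝ) < p / (p - 1) := by linarith
  have hq2pos : (0:ℝ) < (p - (n:ℝ)) / (p - 1) := by linarith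
  set q1v := p / (p - 1) with hq1v
  set q2v := (p - (n:ℝ)) / (p - 1) with hq2v
  set t := ‖x‖ with htdef
  have hE1 : |ε ^ q1v - ε| ≤ 2 * |q1v - 1| := pow_aux hε0.le hε1.le hq1a hq1b
  have hT1 : |t ^ q1v - t| ≤ 2 * |q1v - 1| := pow_aux ht0 ht1 hq1a hq1b
  have hE2 : |ε ^ q2v - ε| ≤ 2 * |q2v - 1| := pow_aux hε0.le hε1.le hq2a hq2b
  have hT2 : |t ^ q2v - t| ≤ 2 * |q2v - 1| := pow_aux ht0 ht1 hq2a hq2b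
  have hE1r : ε ^ q1v ≤ 1 := Real.rpow_le_one hε0.le hε1.le hq1pos.le
  have hT1r : t ^ q1v ≤ 1 := Real.rpow_le_one ht0 ht1 hq1pos.le
  have hE2r : ε ^ q2v ≤ 1 := Real.rpow_le_one hε0.le hε1.le hq2pos.le
  have hT2r : t ^ q2v ≤ 1 := Real.rpow_le_one ht0 ht1 hq2pos.le
  have hE1n : (0:ℝ) ≤ ε ^ q1v := Real.rpow_nonneg hε0.le _
  have hT1n : (0:ℝ) ≤ t ^ q1v := Real.rpow_nonneg ht0 _
  have hE2n : (0:ℝ) ≤ ε ^ q2v := Real.rpow_nonneg hε0.le _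
  have hT2n : (0:ℝ) ≤ t ^ q2v := Real.rpow_nonneg ht0 _
  rw [Real.dist_eq]
  set A := (p - 1) / ((n:ℝ) ^ (1 / (p - 1)) * p) with hAdef
  set B := ε ^ ((n:ℝ) * (1 / (p - 1))) * (p - 1) /
      ((n:ℝ) ^ (1 / (p - 1)) * (p - (n:ℝ))) with hBdef
  set C := ε ^ ((n:ℝ) * (1 / (p - 1))) / ((n:ℝ) * β ^ p) ^ (1 / (p - 1)) with hCdef
  split_ifs with hcase
  · -- t ≤ ε
    have key : (1 / β + 1 - t) -
        (A * (ε ^ q1v - t ^ q1v) + B * (1 - ε ^ q2v) + C)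
        = ((1 - A) * (ε ^ q1v - t ^ q1v) + ((ε - ε ^ q1v) + (t ^ q1v - t)))
          + ((1 - B) * (1 - ε ^ q2v) + (ε ^ q2v - ε))
          + (1 / β - C) := by ring
    rw [key]
    have b1 : |(1 - A) * (ε ^ q1v - t ^ q1v) + ((ε - ε ^ q1v) + (t ^ q1v - t))|
        ≤ |A - 1| + (2 * |q1v - 1| + 2 * |q1v - 1|) := by
      calc |(1 - A) * (ε ^ q1v - t ^ q1v) + ((ε - ε ^ q1v) + (t ^ q1v - t))|
          ≤ |(1 - A) * (ε ^ q1v - t ^ q1v)| + |(ε - ε ^ q1v) + (t ^ q1v - t)| :=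
            abs_add_le _ _
        _ ≤ |1 - A| * |ε ^ q1v - t ^ q1v| + (|ε - ε ^ q1v| + |t ^ q1v - t|) := by
            rw [abs_mul]; exact add_le_add le_rfl (abs_add_le _ _)
        _ ≤ |A - 1| * 1 + (2 * |q1v - 1| + 2 * |q1v - 1|) := by
            rw [abs_sub_comm (1:ℝ) A, abs_sub_comm ε (ε ^ q1v)]
            gcongr
            · exact abs_le.2 ⟨by linarith, by linarith⟩
        _ = |A - 1| + (2 * |q1v - 1| + 2 * |q1v - 1|) := by ring
    have b2 : |(1 - B) * (1 - ε ^ q2v) + (ε ^ q2v - ε)|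
        ≤ |B - 1| + 2 * |q2v - 1| := by
      calc |(1 - B) * (1 - ε ^ q2v) + (ε ^ q2v - ε)|
          ≤ |(1 - B) * (1 - ε ^ q2v)| + |ε ^ q2v - ε| := abs_add_le _ _
        _ ≤ |1 - B| * |1 - ε ^ q2v| + 2 * |q2v - 1| := by
            rw [abs_mul]; exact add_le_add le_rfl hE2
        _ ≤ |B - 1| * 1 + 2 * |q2v - 1| := by
            rw [abs_sub_comm (1:ℝ) B]
            gcongr
            · exact abs_le.2 ⟨by linarith, by linarith⟩
        _ = |B - 1| + 2 * |q2v - 1| := by ring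
    have b3 : |1 / β - C| < η / 8 := by rw [abs_sub_comm]; exact hCp
    have habs := abs_add_three ((1 - A) * (ε ^ q1v - t ^ q1v) + ((ε - ε ^ q1v) + (t ^ q1v - t)))
      ((1 - B) * (1 - ε ^ q2v) + (ε ^ q2v - ε)) (1 / β - C)
    linarith
  · -- ε < t
    have key : (1 / β + 1 - t) - (B * (1 - t ^ q2v) + C)
        = ((1 - B) * (1 - t ^ q2v) + (t ^ q2v - t)) + (1 / β - C) := by ring
    rw [key]
    have b2 : |(1 - B) * (1 - t ^ q2v) + (t ^ q2v - t)|
        ≤ |B - 1| + 2 * |q2v - 1| := by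
      calc |(1 - B) * (1 - t ^ q2v) + (t ^ q2v - t)|
          ≤ |(1 - B) * (1 - t ^ q2v)| + |t ^ q2v - t| := abs_add_le _ _
        _ ≤ |1 - B| * |1 - t ^ q2v| + 2 * |q2v - 1| := by
            rw [abs_mul]; exact add_le_add le_rfl hT2
        _ ≤ |B - 1| * 1 + 2 * |q2v - 1| := by
            rw [abs_sub_comm (1:ℝ) B]
            gcongr
            · exact abs_le.2 ⟨by linarith, by linarith⟩
        _ = |B - 1| + 2 * |q2v - 1| := by ring
    have b3 : |1 / β - C| < η / 8 := by rw [abs_sub_comm]; exact hCp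
    have habs := abs_add_le ((1 - B) * (1 - t ^ q2v) + (t ^ q2v - t)) (1 / β - C)
    linarith
end

section
/- Let Ω ⊂ ℝⁿ be a bounded open set with Lipschitz boundary, β > 0, and for p > 1 let Λ_p denote the first Robin p-Laplacian eigenvalue, Λ_p = inf { ∫_Ω |∇w|^p dx + β^p ∫_{∂Ω} |w|^p dH^{n−1} : w ∈ W^{1,p}(Ω), ‖w‖_{L^p(Ω)} = 1 }. Then limsup_{p→∞} Λ_p^{1/p} ≤ Λ∞ := inf { max(‖∇w‖_{L^∞(Ω)}, β‖w‖_{L^∞(∂Ω)}) : w ∈ W^{1,∞}(Ω), ‖w‖_{L^∞(Ω)} = 1 }. -/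
open MeasureTheory Metric Filter
open Set
open scoped Convolution Topology ENNReal NNReal

/-- The optimal Lipschitz constant of `w` on a set `s`, playing the role of
`‖∇w‖_{L^∞}` for `w ∈ W^{1,∞}`. -/
noncomputable def lipConst {E : Type*} [NormedAddCommGroup E]
    (w : E → ℝ) (s : Set E) : ℝ :=
  sInf {L : ℝ | 0 ≤ L ∧ ∀ x ∈ s, ∀ y ∈ s, |w x - w y| ≤ L * dist x y}

/-- The Robin Rayleigh-quotient value set. -/
def RobinSet {n : ℕ} (Ω : Set (EuclideanSpace ℝ (Fin n))) (β p : ℝ) : Set ℝ :=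
  {r : ℝ | ∃ w : EuclideanSpace ℝ (Fin n) → ℝ,
    ContDiff ℝ 1 w ∧ (∫ x in Ω, |w x| ^ p) = 1 ∧
    r = (∫ x in Ω, ‖fderiv ℝ w x‖ ^ p) +
      β ^ p * ∫ x in frontier Ω, |w x| ^ p ∂(μH[(n : ℝ) - 1])}

lemma robinSet_nonneg {n : ℕ} {Ω : Set (EuclideanSpace ℝ (Fin n))} {β p : ℝ} (hβ : 0 ≤ β)
    {r : ℝ} (hr : r ∈ RobinSet Ω β p) : 0 ≤ r := by
  obtain ⟨w, -, -, rfl⟩ := hr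
  have h1 : 0 ≤ ∫ x in Ω, ‖fderiv ℝ w x‖ ^ p :=
    integral_nonneg fun x => Real.rpow_nonneg (norm_nonneg _) _
  have h2 : 0 ≤ ∫ x in frontier Ω, |w x| ^ p ∂(μH[(n : ℝ) - 1]) :=
    integral_nonneg fun x => Real.rpow_nonneg (abs_nonneg _) _
  have h3 : 0 ≤ β ^ p := Real.rpow_nonneg hβ _
  positivity

lemma smooth_approx {n : ℕ} (g : EuclideanSpace ℝ (Fin n) → ℝ) (L : ℝ≥0)
    (hg : LipschitzWith L g) {δ : ℝ} (hδ : 0 < δ) :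
    ∃ v : EuclideanSpace ℝ (Fin n) → ℝ, ContDiff ℝ 1 v ∧ LipschitzWith L v ∧
      ∀ x, |v x - g x| ≤ L * δ := by
  set φ : ContDiffBump (0 : EuclideanSpace ℝ (Fin n)) := ⟨δ/2, δ, by positivity, by linarith⟩
  set v : EuclideanSpace ℝ (Fin n) → ℝ := φ.normed volume ⋆[ContinuousLinearMap.lsmul ℝ ℝ, volume] g
    with hv
  have hgc : Continuous g := hg.continuous
  have hint : ∀ x : EuclideanSpace ℝ (Fin n),
      Integrable (fun t => φ.normed volume t • g (x - t)) volume := by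
    intro x
    apply Continuous.integrable_of_hasCompactSupport
    · exact (φ.continuous_normed).smul (hgc.comp (continuous_const.sub continuous_id))
    · exact (φ.hasCompactSupport_normed).smul_right
  refine ⟨v, ?_, ?_, ?_⟩
  · have hcd := HasCompactSupport.contDiff_convolution_left (μ := volume) (n := ⊤)
      (L := ContinuousLinearMap.lsmul ℝ ℝ) (φ.hasCompactSupport_normed)
      (φ.contDiff_normed (μ := volume)) (hgc.locallyIntegrable)
    exact hcd.of_le (by exact_mod_cast le_top)
  · refine LipschitzWith.of_dist_le_mul fun x y => ?_
    have hInt3 : Integrable (fun t => φ.normed volume t • (g (x - t) - g (y - t))) volume := by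
      have h := (hint x).sub (hint y)
      apply h.congr
      filter_upwards with t
      show _ = φ.normed volume t • (g (x - t) - g (y - t))
      simp only [smul_eq_mul, Pi.sub_apply]
      ring
    have hxy : v x - v y = ∫ t, φ.normed volume t • (g (x - t) - g (y - t)) := by
      simp only [hv, convolution_def, ContinuousLinearMap.lsmul_apply]
      rw [← integral_sub (hint x) (hint y)]
      simp only [smul_eq_mul, mul_sub]
    rw [Real.dist_eq, hxy]
    calc |∫ t, φ.normed volume t • (g (x - t) - g (y - t))|
        ≤ ∫ t, |φ.normed volume t| * |g (x - t) - g (y - t)| := by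
          simpa [Real.norm_eq_abs, abs_mul] using norm_integral_le_integral_norm
            (μ := volume) (fun t => φ.normed volume t • (g (x - t) - g (y - t)))
      _ ≤ ∫ t, φ.normed volume t * ((L : ℝ) * dist x y) := by
          apply integral_mono
          · have := hInt3.abs
            apply this.congr
            filter_upwards with t
            show _ = |φ.normed volume t| * _
            simp [abs_mul]
          · exact (φ.integrable_normed).mul_const _
          intro t
          show |φ.normed volume t| * |g (x - t) - g (y - t)| ≤ _
          rw [abs_of_nonneg (φ.nonneg_normed t)]
          apply mul_le_mul_of_nonneg_left _ (φ.nonneg_normed t)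
          have h2 := hg.dist_le_mul (x - t) (y - t)
          rw [Real.dist_eq] at h2
          refine h2.trans ?_
          have h3 : dist (x - t) (y - t) = dist x y := by
            simp [dist_eq_norm]
          rw [h3]
      _ = (L : ℝ) * dist x y := by
          rw [integral_mul_const, φ.integral_normed, one_mul]
  · intro x
    have := φ.dist_normed_convolution_le (μ := volume) (hgc.aestronglyMeasurable)
      (fun y hy => ?_) (x₀ := x) (ε := (L : ℝ) * δ)
    · rwa [Real.dist_eq] at this
    · refine (hg.dist_le_mul y x).trans ?_
      have : dist y x ≤ δ := le_of_lt (by simpa [φ] using hy)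
      exact mul_le_mul_of_nonneg_left this L.coe_nonneg

set_option maxHeartbeats 1000000 in
lemma key {n : ℕ} (Ω : Set (EuclideanSpace ℝ (Fin n)))
    (hΩo : IsOpen Ω) (hΩb : Bornology.IsBounded Ω) (hΩne : Ω.Nonempty)
    (β : ℝ) (hβ : 0 < β) (w : EuclideanSpace ℝ (Fin n) → ℝ) (L₀ : ℝ≥0)
    (hwl : LipschitzOnWith L₀ w (closure Ω))
    (hwsup : sSup ((fun x => |w x|) '' Ω) = 1) :
    limsup (fun p : ℝ => (sInf (RobinSet Ω β p)) ^ (1 / p)) atTop ≤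
      max (lipConst w (closure Ω)) (β * sSup ((fun x => |w x|) '' frontier Ω)) := by
  set Sb := sSup ((fun x => |w x|) '' frontier Ω) with hSbdef
  set m := max (lipConst w (closure Ω)) (β * Sb) with hmdef
  have Hε : ∀ ε : ℝ, 0 < ε → ε < 1/6 →
      limsup (fun p : ℝ => (sInf (RobinSet Ω β p)) ^ (1 / p)) atTop ≤
        (m + (1 + β) * ε) * (1 + ε) / (1 - 3 * ε) := by
    intro ε hε hε6
    have hε3 : (0:ℝ) < 1 - 3 * ε := by linarith
    have hclK : IsCompact (closure Ω) := hΩb.isCompact_closure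
    have hwc : ContinuousOn (fun x => |w x|) (closure Ω) := hwl.continuousOn.abs
    have hbdd : BddAbove ((fun x => |w x|) '' closure Ω) :=
      (hclK.image_of_continuousOn hwc).bddAbove
    have hfr_sub : frontier Ω ⊆ closure Ω := frontier_subset_closure
    have hSb0 : 0 ≤ Sb := by
      rw [hSbdef]
      exact Real.sSup_nonneg (by rintro r ⟨x, -, rfl⟩; exact abs_nonneg _)
    have hwle1 : ∀ x ∈ Ω, |w x| ≤ 1 := by
      intro x hx
      rw [← hwsup]
      exact le_csSup (hbdd.mono (Set.image_mono subset_closure)) ⟨x, hx, rfl⟩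
    have hwfr : ∀ x ∈ frontier Ω, |w x| ≤ Sb := fun x hx =>
      le_csSup (hbdd.mono (Set.image_mono hfr_sub)) ⟨x, hx, rfl⟩
    -- choose a near-optimal Lipschitz constant `L`
    have hlipne : Set.Nonempty {L : ℝ | 0 ≤ L ∧ ∀ x ∈ closure Ω, ∀ y ∈ closure Ω,
        |w x - w y| ≤ L * dist x y} := by
      refine ⟨L₀, L₀.coe_nonneg, fun x hx y hy => ?_⟩
      have := hwl.dist_le_mul x hx y hy
      rwa [Real.dist_eq] at this
    obtain ⟨L, ⟨hL0, hLlip⟩, hLlt⟩ := Real.lt_sInf_add_pos hlipne hε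
    have hLlt' : L < lipConst w (closure Ω) + ε := hLlt
    have hLcoe : (L.toNNReal : ℝ) = L := Real.coe_toNNReal L hL0
    have hwlL : LipschitzOnWith L.toNNReal w (closure Ω) := by
      apply LipschitzOnWith.of_dist_le_mul
      intro x hx y hy
      rw [Real.dist_eq, hLcoe]
      exact hLlip x hx y hy
    obtain ⟨g, hgl, hgw⟩ := hwlL.extend_real
    set δ := ε / (L + 1) with hδdef
    have hδ : 0 < δ := by positivity
    have hLδ : L * δ ≤ ε := by
      have h2 : L / (L + 1) ≤ 1 := div_le_one_of_le₀ (by linarith) (by linarith)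
      have h1 : L * δ = ε * (L / (L + 1)) := by rw [hδdef]; ring
      nlinarith
    obtain ⟨v, hvCD, hvLip, hvg⟩ := smooth_approx g L.toNNReal hgl hδ
    have hvg' : ∀ x, |v x - g x| ≤ ε := fun x => (hvg x).trans (by rw [hLcoe]; exact hLδ)
    have hvw : ∀ x ∈ closure Ω, |v x - w x| ≤ ε := by
      intro x hx
      rw [hgw hx]
      exact hvg' x
    have hv_fr : ∀ x ∈ frontier Ω, |v x| ≤ Sb + ε := by
      intro x hx
      have h1 := hvw x (hfr_sub hx)
      have h2 := hwfr x hx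
      calc |v x| = |w x + (v x - w x)| := by ring_nf
        _ ≤ |w x| + |v x - w x| := abs_add_le _ _
        _ ≤ Sb + ε := add_le_add h2 h1
    have hv_Ω : ∀ x ∈ Ω, |v x| ≤ 1 + ε := by
      intro x hx
      have h1 := hvw x (subset_closure hx)
      have h2 := hwle1 x hx
      calc |v x| = |w x + (v x - w x)| := by ring_nf
        _ ≤ |w x| + |v x - w x| := abs_add_le _ _
        _ ≤ 1 + ε := add_le_add h2 h1
    have hfd : ∀ x, ‖fderiv ℝ v x‖ ≤ L := fun x => by
      have := norm_fderiv_le_of_lipschitz ℝ hvLip (x₀ := x)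
      rwa [hLcoe] at this
    -- a small ball on which `|v|` is close to `1`
    obtain ⟨a, ⟨x₀, hx₀Ω, hax⟩, ha⟩ : ∃ a ∈ (fun x => |w x|) '' Ω, 1 - ε < a :=
      exists_lt_of_lt_csSup (hΩne.image _) (by rw [hwsup]; linarith)
    obtain ⟨ρ₁, hρ₁, hball₁⟩ := Metric.isOpen_iff.1 hΩo x₀ hx₀Ω
    set ρ := min ρ₁ δ with hρdef
    have hρ : 0 < ρ := lt_min hρ₁ hδ
    have hballΩ : ball x₀ ρ ⊆ Ω := (ball_subset_ball (min_le_left _ _)).trans hball₁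
    have hvball : ∀ x ∈ ball x₀ ρ, 1 - 3 * ε ≤ |v x| := by
      intro x hx
      have hxΩ : x ∈ Ω := hballΩ hx
      have hLρ : L * ρ ≤ ε :=
        le_trans (mul_le_mul_of_nonneg_left (min_le_right _ _) hL0) hLδ
      have h1 : |w x - w x₀| ≤ L * ρ := by
        have hd : dist x x₀ ≤ ρ := (mem_ball.1 hx).le
        calc |w x - w x₀| ≤ L * dist x x₀ :=
            hLlip x (subset_closure hxΩ) x₀ (subset_closure hx₀Ω)
          _ ≤ L * ρ := mul_le_mul_of_nonneg_left hd hL0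

      have h2 : 1 - 2*ε ≤ |w x| := by
        have h3 := abs_sub_abs_le_abs_sub (w x₀) (w x)
        have h4 : |w x₀ - w x| = |w x - w x₀| := abs_sub_comm _ _
        linarith
      have h3 := hvw x (subset_closure hxΩ)
      have h5 := abs_sub_abs_le_abs_sub (w x) (v x)
      have h6 : |w x - v x| = |v x - w x| := abs_sub_comm _ _
      linarith
    -- measure-theoretic constants
    have hVfin : volume Ω < ⊤ := lt_of_le_of_lt (measure_mono subset_closure) hclK.measure_lt_top
    set V := (volume Ω).toReal with hVdef
    have hV0 : 0 < V := ENNReal.toReal_pos (hΩo.measure_ne_zero volume hΩne) hVfin.ne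
    set VB := (volume (ball x₀ ρ)).toReal with hVBdef
    have hVB : 0 < VB :=
      ENNReal.toReal_pos (measure_ball_pos volume x₀ hρ).ne' measure_ball_lt_top.ne
    set M := Sb + ε with hMdef
    have hM : 0 < M := by rw [hMdef]; linarith
    have hfr_meas : MeasurableSet (frontier Ω) := isClosed_frontier.measurableSet
    have hvcont : Continuous v := hvCD.continuous
    -- dichotomy for the boundary integral
    obtain ⟨q, C, hq1, hC0, hBle⟩ : ∃ q C : ℝ, 1 ≤ q ∧ 0 ≤ C ∧ ∀ p, q ≤ p →
        (∫ x in frontier Ω, |v x| ^ p ∂(μH[(n : ℝ) - 1])) ≤ M ^ (p - q) * C := by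
      by_cases h : ∃ q : ℝ, 1 ≤ q ∧
          Integrable (fun x => |v x| ^ q) ((μH[(n : ℝ) - 1]).restrict (frontier Ω))
      · obtain ⟨q, hq1, hqint⟩ := h
        refine ⟨q, ∫ x in frontier Ω, |v x| ^ q ∂(μH[(n : ℝ) - 1]), hq1,
          integral_nonneg (fun x => Real.rpow_nonneg (abs_nonneg _) _), fun p hpq => ?_⟩
        have hq0 : (0:ℝ) < q := lt_of_lt_of_le one_pos hq1
        have hp0 : (0:ℝ) < p := lt_of_lt_of_le hq0 hpq
        have hpt : ∀ x ∈ frontier Ω, |v x| ^ p ≤ M ^ (p - q) * |v x| ^ q := by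
          intro x hx
          rcases eq_or_lt_of_le (abs_nonneg (v x)) with h0 | h0
          · rw [← h0, Real.zero_rpow hp0.ne', Real.zero_rpow hq0.ne']
            simp
          · have h4 : |v x| ^ p = |v x| ^ (p - q) * |v x| ^ q := by
              rw [← Real.rpow_add h0]
              ring_nf
            rw [h4]
            apply mul_le_mul_of_nonneg_right _ (Real.rpow_nonneg (abs_nonneg _) _)
            exact Real.rpow_le_rpow h0.le (hv_fr x hx) (by linarith)
        have hmeas : AEStronglyMeasurable (fun x => |v x| ^ p)
            ((μH[(n : ℝ) - 1]).restrict (frontier Ω)) :=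
          (hvcont.abs.rpow_const (fun x => Or.inr hp0.le)).aestronglyMeasurable
        have hae : ∀ᵐ x ∂((μH[(n : ℝ) - 1]).restrict (frontier Ω)),
            |v x| ^ p ≤ M ^ (p - q) * |v x| ^ q :=
          (ae_restrict_iff' hfr_meas).2 (Filter.Eventually.of_forall hpt)
        have haen : ∀ᵐ x ∂((μH[(n : ℝ) - 1]).restrict (frontier Ω)),
            ‖|v x| ^ p‖ ≤ M ^ (p - q) * |v x| ^ q := by
          filter_upwards [hae] with x hx
          rwa [Real.norm_eq_abs, abs_of_nonneg (Real.rpow_nonneg (abs_nonneg _) _)]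
        have hintp : Integrable (fun x => |v x| ^ p)
            ((μH[(n : ℝ) - 1]).restrict (frontier Ω)) :=
          (hqint.const_mul _).mono' hmeas haen
        calc (∫ x in frontier Ω, |v x| ^ p ∂(μH[(n : ℝ) - 1]))
            ≤ (∫ x in frontier Ω, M ^ (p - q) * |v x| ^ q ∂(μH[(n : ℝ) - 1])) :=
              integral_mono_ae hintp (hqint.const_mul _) hae
          _ = M ^ (p - q) * ∫ x in frontier Ω, |v x| ^ q ∂(μH[(n : ℝ) - 1]) :=
              integral_const_mul _ _
      · refine ⟨1, 0, le_refl _, le_refl _, fun p hp => ?_⟩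
        rw [integral_undef, mul_zero]
        intro hint
        exact h ⟨p, hp, hint⟩
    -- remaining constants
    set K := max L (β * M) with hKdef
    have hK : 0 < K := lt_of_lt_of_le (mul_pos hβ hM) (le_max_right _ _)
    set C' := M ^ (-q) * C with hC'def
    have hC'0 : 0 ≤ C' := mul_nonneg (Real.rpow_nonneg hM.le _) hC0
    set D := (V + C') / VB with hDdef
    have hD : 0 < D := div_pos (by linarith) hVB
    have hDlim : Tendsto (fun p : ℝ => D ^ (1 / p)) atTop (𝓝 1) := by
      have h1 : Tendsto (fun p : ℝ => 1 / p) atTop (𝓝 0) := by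
        simpa [one_div] using tendsto_inv_atTop_zero
      have h2 : ContinuousAt (fun y : ℝ => D ^ y) 0 := Real.continuousAt_const_rpow hD.ne'
      have h3 := h2.tendsto.comp h1
      simpa [Real.rpow_zero, Function.comp_def] using h3
    -- the eventual bound
    have hev : ∀ᶠ p in atTop,
        (sInf (RobinSet Ω β p)) ^ (1/p) ≤ K * (1 + ε) / (1 - 3 * ε) := by
      filter_upwards [eventually_ge_atTop (max q 1),
        hDlim.eventually (eventually_le_nhds (by linarith : (1:ℝ) < 1 + ε))] with p hpq1 hDp
      have hp1 : (1:ℝ) ≤ p := le_trans (le_max_right q 1) hpq1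
      have hpq : q ≤ p := le_trans (le_max_left q 1) hpq1
      have hp0 : (0:ℝ) < p := lt_of_lt_of_le one_pos hp1
      have hcont : Continuous (fun x => |v x| ^ p) :=
        hvcont.abs.rpow_const (fun x => Or.inr hp0.le)
      have hIint : IntegrableOn (fun x => |v x| ^ p) Ω volume := by
        refine Integrable.mono' (g := fun _ => (1+ε) ^ p) (integrableOn_const hVfin.ne)
          hcont.aestronglyMeasurable ?_
        refine (ae_restrict_iff' hΩo.measurableSet).2 (Filter.Eventually.of_forall fun x hx => ?_)
        rw [Real.norm_eq_abs, abs_of_nonneg (Real.rpow_nonneg (abs_nonneg _) _)]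
        exact Real.rpow_le_rpow (abs_nonneg _) (hv_Ω x hx) hp0.le
      set I := ∫ x in Ω, |v x| ^ p with hIdef
      have hIlow : (1 - 3*ε) ^ p * VB ≤ I := by
        have hb1 : ∫ _x in ball x₀ ρ, (1 - 3*ε) ^ p = (1 - 3*ε) ^ p * VB := by
          rw [setIntegral_const, smul_eq_mul, mul_comm]; rfl
        calc (1 - 3*ε)^p * VB = (∫ _x in ball x₀ ρ, (1 - 3*ε)^p) := hb1.symm
          _ ≤ (∫ x in ball x₀ ρ, |v x| ^ p) := by
              apply setIntegral_mono_on (integrableOn_const measure_ball_lt_top.ne)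
                (hIint.mono_set hballΩ) measurableSet_ball
              intro x hx
              exact Real.rpow_le_rpow (by linarith) (hvball x hx) hp0.le
          _ ≤ I := setIntegral_mono_set hIint
              (Filter.Eventually.of_forall fun x => Real.rpow_nonneg (abs_nonneg _) _)
              (HasSubset.Subset.eventuallyLE hballΩ)
      have hIpos : 0 < I :=
        lt_of_lt_of_le (mul_pos (Real.rpow_pos_of_pos hε3 _) hVB) hIlow
      set c := I ^ (-(1/p)) with hcdef
      have hc : 0 < c := Real.rpow_pos_of_pos hIpos _
      have hcp : c ^ p = I⁻¹ := by
        rw [hcdef, ← Real.rpow_mul hIpos.le]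
        have h11 : (-(1/p)) * p = -1 := by field_simp
        rw [h11, Real.rpow_neg_one]
      set u := fun x => c * v x with hudef
      have hu_cd : ContDiff ℝ 1 u := contDiff_const.mul hvCD
      have hu_abs : ∀ x, |u x| ^ p = c ^ p * |v x| ^ p := by
        intro x
        have h12 : |u x| = c * |v x| := by
          rw [hudef]
          simp [abs_mul, abs_of_pos hc]
        rw [h12, Real.mul_rpow hc.le (abs_nonneg _)]
      have hu1 : (∫ x in Ω, |u x| ^ p) = 1 := by
        have h13 : (∫ x in Ω, |u x| ^ p) = c ^ p * I := by
          rw [hIdef]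
          simp only [hu_abs]
          rw [integral_const_mul]
        rw [h13, hcp, inv_mul_cancel₀ hIpos.ne']
      have hvdiff : Differentiable ℝ v := hvCD.differentiable one_ne_zero
      have hu_fd : ∀ x, ‖fderiv ℝ u x‖ ^ p = c ^ p * ‖fderiv ℝ v x‖ ^ p := by
        intro x
        have h5 : fderiv ℝ u x = c • fderiv ℝ v x := by
          rw [hudef]
          exact fderiv_const_mul (hvdiff x) c
        rw [h5, norm_smul, Real.norm_eq_abs, abs_of_pos hc,
          Real.mul_rpow hc.le (norm_nonneg _)]
      set A := ∫ x in Ω, ‖fderiv ℝ v x‖ ^ p with hAdef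
      set B := ∫ x in frontier Ω, |v x| ^ p ∂(μH[(n : ℝ) - 1]) with hBdef
      have hrmem : c ^ p * A + β ^ p * (c ^ p * B) ∈ RobinSet Ω β p := by
        refine ⟨u, hu_cd, hu1, ?_⟩
        congr 1
        · rw [hAdef]
          simp only [hu_fd]
          rw [integral_const_mul]
        · congr 1
          rw [hBdef]
          simp only [hu_abs]
          rw [integral_const_mul]
      have hfdc : Continuous (fun x => ‖fderiv ℝ v x‖ ^ p) :=
        ((hvCD.continuous_fderiv one_ne_zero).norm).rpow_const (fun x => Or.inr hp0.le)
      have hA_int : IntegrableOn (fun x => ‖fderiv ℝ v x‖ ^ p) Ω volume := by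
        refine Integrable.mono' (g := fun _ => L ^ p) (integrableOn_const hVfin.ne)
          hfdc.aestronglyMeasurable ?_
        refine Filter.Eventually.of_forall fun x => ?_
        rw [Real.norm_eq_abs, abs_of_nonneg (Real.rpow_nonneg (norm_nonneg _) _)]
        exact Real.rpow_le_rpow (norm_nonneg _) (hfd x) hp0.le
      have hA_le : A ≤ L ^ p * V := by
        have h15 : A ≤ ∫ _x in Ω, L ^ p := by
          apply setIntegral_mono_on hA_int (integrableOn_const hVfin.ne)
            hΩo.measurableSet
          intro x hx
          exact Real.rpow_le_rpow (norm_nonneg _) (hfd x) hp0.le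
        have h16 : (∫ _x in Ω, L ^ p) = L ^ p * V := by
          rw [setIntegral_const, smul_eq_mul, mul_comm]; rfl
        exact h15.trans_eq h16
      have hA0 : 0 ≤ A := integral_nonneg fun x => Real.rpow_nonneg (norm_nonneg _) _
      have hB0 : 0 ≤ B := integral_nonneg fun x => Real.rpow_nonneg (abs_nonneg _) _
      have hBle' : B ≤ M ^ (p - q) * C := hBle p hpq
      have hLK : L ^ p ≤ K ^ p := Real.rpow_le_rpow hL0 (le_max_left _ _) hp0.le
      have hbMK : (β * M) ^ p ≤ K ^ p :=
        Real.rpow_le_rpow (by positivity) (le_max_right _ _) hp0.le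
      have hsum : A + β ^ p * B ≤ K ^ p * (V + C') := by
        have h6 : β ^ p * B ≤ β ^ p * (M ^ (p - q) * C) :=
          mul_le_mul_of_nonneg_left hBle' (Real.rpow_nonneg hβ.le _)
        have h7 : β ^ p * (M ^ (p - q) * C) = (β * M) ^ p * C' := by
          rw [hC'def, Real.rpow_sub hM, Real.mul_rpow hβ.le hM.le, Real.rpow_neg hM.le]
          ring
        have h8 : (β * M) ^ p * C' ≤ K ^ p * C' := mul_le_mul_of_nonneg_right hbMK hC'0
        have h9 : A ≤ K ^ p * V := hA_le.trans (mul_le_mul_of_nonneg_right hLK hV0.le)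
        have h10 : β ^ p * B ≤ K ^ p * C' := by
          rw [← h7] at h8
          exact h6.trans h8
        calc A + β ^ p * B ≤ K ^ p * V + K ^ p * C' := add_le_add h9 h10
          _ = K ^ p * (V + C') := by ring
      have hr_le : c ^ p * A + β ^ p * (c ^ p * B) ≤ K ^ p * (V + C') / I := by
        have h14 : c ^ p * A + β ^ p * (c ^ p * B) = (A + β ^ p * B) * I⁻¹ := by
          rw [hcp]; ring
        rw [h14, div_eq_mul_inv]
        exact mul_le_mul_of_nonneg_right hsum (inv_nonneg.2 hIpos.le)
      have hbdd_below : BddBelow (RobinSet Ω β p) := ⟨0, fun r hr => robinSet_nonneg hβ.le hr⟩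
      have hsInf_le : sInf (RobinSet Ω β p) ≤ K ^ p * (V + C') / I :=
        (csInf_le hbdd_below hrmem).trans hr_le
      have hsInf0 : 0 ≤ sInf (RobinSet Ω β p) :=
        Real.sInf_nonneg (fun r hr => robinSet_nonneg hβ.le hr)
      have hchain1 : (sInf (RobinSet Ω β p)) ^ (1/p) ≤ (K ^ p * (V + C') / I) ^ (1/p) :=
        Real.rpow_le_rpow hsInf0 hsInf_le (by positivity)
      have hIVb : K ^ p * (V + C') / I ≤ K ^ p * (V + C') / ((1 - 3*ε) ^ p * VB) := by
        gcongr
      have heq1 : K ^ p * (V + C') / ((1 - 3*ε) ^ p * VB) = (K / (1 - 3*ε)) ^ p * D := by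
        rw [hDdef, Real.div_rpow hK.le hε3.le, div_mul_div_comm]
      have heq2 : ((K / (1 - 3*ε)) ^ p * D) ^ (1/p) = (K / (1 - 3*ε)) * D ^ (1/p) := by
        rw [Real.mul_rpow (Real.rpow_nonneg (by positivity) _) hD.le]
        congr 1
        rw [← Real.rpow_mul (by positivity : (0:ℝ) ≤ K / (1 - 3*ε)),
          mul_one_div_cancel hp0.ne', Real.rpow_one]
      have hchain2 : (K ^ p * (V + C') / I) ^ (1/p) ≤ (K / (1 - 3*ε)) * D ^ (1/p) := by
        rw [← heq2, ← heq1]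
        exact Real.rpow_le_rpow (by positivity) hIVb (by positivity)
      have hfinal : (K / (1 - 3*ε)) * D ^ (1/p) ≤ K * (1 + ε) / (1 - 3*ε) := by
        calc (K / (1 - 3*ε)) * D ^ (1/p) ≤ (K / (1 - 3*ε)) * (1 + ε) :=
            mul_le_mul_of_nonneg_left hDp (by positivity)
          _ = K * (1 + ε) / (1 - 3*ε) := by ring
      exact hchain1.trans (hchain2.trans hfinal)
    have hcob : IsCoboundedUnder (· ≤ ·) atTop
        (fun p : ℝ => (sInf (RobinSet Ω β p)) ^ (1/p)) :=
      isCoboundedUnder_le_of_le atTop (x := 0)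
        (fun p => Real.rpow_nonneg
          (Real.sInf_nonneg (fun r hr => robinSet_nonneg hβ.le hr)) _)
    have hlim : limsup (fun p : ℝ => (sInf (RobinSet Ω β p)) ^ (1 / p)) atTop ≤
        K * (1 + ε) / (1 - 3 * ε) := limsup_le_of_le hcob hev
    have hKle : K ≤ m + (1 + β) * ε := by
      rw [hKdef]
      apply max_le
      · have h1 : lipConst w (closure Ω) ≤ m := le_max_left _ _
        nlinarith
      · have h2 : β * Sb ≤ m := le_max_right _ _
        rw [hMdef]
        nlinarith
    refine hlim.trans ?_
    gcongr
  -- pass to the limit ε → 0⁺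
  set Φ : ℝ → ℝ := fun ε => (m + (1 + β) * ε) * (1 + ε) / (1 - 3 * ε) with hΦdef
  have hΦc : ContinuousAt Φ 0 := by
    apply ContinuousAt.div
    · fun_prop
    · fun_prop
    · norm_num
  have hΦ0 : Φ 0 = m := by simp [hΦdef]
  have hΦt : Tendsto Φ (𝓝[>] (0:ℝ)) (𝓝 m) := by
    rw [← hΦ0]
    exact (hΦc.tendsto).mono_left nhdsWithin_le_nhds
  refine ge_of_tendsto hΦt ?_
  filter_upwards [Ioo_mem_nhdsGT_of_mem (show (0:ℝ) ∈ Set.Ico (0:ℝ) (1/6) by constructor <;> norm_num)]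
    with ε hε
  exact Hε ε hε.1 hε.2

/-- `limsup_{p→∞} Λ_p^{1/p} ≤ Λ∞`, where `Λ_p` is the first Robin
`p`-Laplacian eigenvalue (Rayleigh quotient over `w` with `‖w‖_{L^p(Ω)} = 1`) and
`Λ∞` is the infimum of `max(‖∇w‖_{L^∞(Ω)}, β‖w‖_{L^∞(∂Ω)})` over `w ∈ W^{1,∞}(Ω)`
with `‖w‖_{L^∞(Ω)} = 1`. -/
theorem stmt_18 {n : ℕ} (Ω : Set (EuclideanSpace ℝ (Fin n)))
    (hΩo : IsOpen Ω) (hΩb : Bornology.IsBounded Ω) (hΩne : Ω.Nonempty)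
    (β : ℝ) (hβ : 0 < β) :
    limsup (fun p : ℝ =>
        (sInf {r : ℝ | ∃ w : EuclideanSpace ℝ (Fin n) → ℝ,
          ContDiff ℝ 1 w ∧ (∫ x in Ω, |w x| ^ p) = 1 ∧
          r = (∫ x in Ω, ‖fderiv ℝ w x‖ ^ p) +
            β ^ p * ∫ x in frontier Ω, |w x| ^ p ∂(μH[(n : ℝ) - 1])}) ^ (1 / p))
      atTop ≤
      sInf {m : ℝ | ∃ w : EuclideanSpace ℝ (Fin n) → ℝ,
        (∃ L : NNReal, LipschitzOnWith L w (closure Ω)) ∧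
        sSup ((fun x => |w x|) '' Ω) = 1 ∧
        m = max (lipConst w (closure Ω))
                (β * sSup ((fun x => |w x|) '' frontier Ω))} := by
  have hne : Set.Nonempty {m : ℝ | ∃ w : EuclideanSpace ℝ (Fin n) → ℝ,
      (∃ L : NNReal, LipschitzOnWith L w (closure Ω)) ∧
      sSup ((fun x => |w x|) '' Ω) = 1 ∧
      m = max (lipConst w (closure Ω))
              (β * sSup ((fun x => |w x|) '' frontier Ω))} := by
    refine ⟨_, fun _ => (1 : ℝ), ⟨0, LipschitzWith.lipschitzOnWith (LipschitzWith.const 1)⟩,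
      ?_, rfl⟩
    have h1 : (fun x : EuclideanSpace ℝ (Fin n) => |(1 : ℝ)|) '' Ω = {1} := by
      rw [show (fun _ : EuclideanSpace ℝ (Fin n) => |(1 : ℝ)|) = fun _ => (1 : ℝ) from
        funext fun _ => abs_one]
      exact hΩne.image_const 1
    rw [h1, csSup_singleton]
  apply le_csInf hne
  rintro b ⟨w, ⟨L₀, hwl⟩, hwsup, rfl⟩
  exact key Ω hΩo hΩb hΩne β hβ w L₀ hwl hwsup
end
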